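/- Let H be a real Hilbert space, and let M1 and M2 be closed subspaces of H with orthogonal projections P1 onto M1 and P2 onto M2. Let P_I be the orthogonal projection onto the intersection M1 ⊓ M2. Then for every h ∈ H, the iterates (P2 ∘ P1)^k h converge in norm to P_I h as k → ∞. -/

import Mathlib

open RealInnerProductSpace Filter

section AuxVN

variable {H : Type*} [NormedAddCommGroup H] [InnerProductSpace ℝ H]

private lemma vn_pyth (K : Submodule ℝ H) [CompleteSpace K] (x : H) :
    ‖x‖ ^ 2 = ‖(Submodule.orthogonalProjection K x : H)‖ ^ 2 + ‖x - Submodule.orthogonalProjection K x‖ ^ 2 := by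
  have h : ⟪x - (Submodule.orthogonalProjection K x : H), (Submodule.orthogonalProjection K x : H)⟫ = 0 := Submodule.starProjection_inner_eq_zero x (Submodule.orthogonalProjection K x)
    (Submodule.orthogonalProjection K x).2
  have hx : x = (x - Submodule.orthogonalProjection K x) + (Submodule.orthogonalProjection K x : H) := by abel
  calc ‖x‖ ^ 2 = ‖(x - Submodule.orthogonalProjection K x) + (Submodule.orthogonalProjection K x : H)‖ ^ 2 := by
        rw [← hx]
    _ = _ := by rw [norm_add_sq_real, h]; ring

private lemma vn_norm_le (K : Submodule ℝ H) [CompleteSpace K] (x : H) :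
    ‖(Submodule.orthogonalProjection K x : H)‖ ≤ ‖x‖ := by
  have := vn_pyth K x
  nlinarith [norm_nonneg (x - (Submodule.orthogonalProjection K x : H)),
    norm_nonneg (Submodule.orthogonalProjection K x : H), norm_nonneg x]

private lemma vn_eq_self_of_norm (K : Submodule ℝ H) [CompleteSpace K] {x : H}
    (hx : ‖(Submodule.orthogonalProjection K x : H)‖ = ‖x‖) :
    (Submodule.orthogonalProjection K x : H) = x := by
  have h := vn_pyth K x
  rw [hx] at h
  have : ‖x - (Submodule.orthogonalProjection K x : H)‖ = 0 := by nlinarith [norm_nonneg (x - (Submodule.orthogonalProjection K x : H))]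
  have := norm_eq_zero.mp this
  have : x = (Submodule.orthogonalProjection K x : H) := by linear_combination (norm := abel) this
  exact this.symm

private lemma vn_inner_self (K : Submodule ℝ H) [CompleteSpace K] (x : H) :
    ⟪(Submodule.orthogonalProjection K x : H), x⟫ = ‖(Submodule.orthogonalProjection K x : H)‖ ^ 2 := by
  have h : ⟪x - (Submodule.orthogonalProjection K x : H), (Submodule.orthogonalProjection K x : H)⟫ = 0 := Submodule.starProjection_inner_eq_zero x (Submodule.orthogonalProjection K x)
    (Submodule.orthogonalProjection K x).2
  rw [inner_sub_left] at h
  rw [real_inner_comm, ← real_inner_self_eq_norm_sq]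
  linarith

end AuxVN

/-- **Von Neumann's alternating projection theorem.**
Let `H` be a real Hilbert space and `M1`, `M2` closed subspaces of `H`, with
orthogonal projections `P1` onto `M1`, `P2` onto `M2`, and `P_I` onto the
intersection `M1 ⊓ M2`.  Then for every `h ∈ H`, the iterates `(P2 ∘ P1)^[k] h`
converge in norm to `P_I h` as `k → ∞`. -/
theorem alternating_projection
    {H : Type*} [NormedAddCommGroup H] [InnerProductSpace ℝ H] [CompleteSpace H]
    (M1 M2 : Submodule ℝ H)
    (hM1 : IsClosed (M1 : Set H)) (hM2 : IsClosed (M2 : Set H))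
    [CompleteSpace M1] [CompleteSpace M2] [CompleteSpace (M1 ⊓ M2 : Submodule ℝ H)]
    (h : H) :
    Filter.Tendsto
      (fun k : ℕ =>
        (fun x : H => (Submodule.orthogonalProjection M2 ((Submodule.orthogonalProjection M1 x : H)) : H))^[k] h)
      Filter.atTop
      (nhds ((Submodule.orthogonalProjection (M1 ⊓ M2) h : H))) := by
  set p1 : H → H := fun x => (Submodule.orthogonalProjection M1 x : H) with hp1
  set p2 : H → H := fun x => (Submodule.orthogonalProjection M2 x : H) with hp2
  set b : H → H := fun x => p1 (p2 (p1 x)) with hb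
  set f : H → H := fun x => p2 (p1 x) with hf
  have hp1cont : Continuous p1 := continuous_subtype_val.comp (Submodule.orthogonalProjection M1).continuous
  have hp2cont : Continuous p2 := continuous_subtype_val.comp (Submodule.orthogonalProjection M2).continuous
  have hbcont : Continuous b := hp1cont.comp (hp2cont.comp hp1cont)
  -- self-adjointness of p1, p2, b
  have hadj1 : ∀ u v : H, ⟪p1 u, v⟫ = ⟪u, p1 v⟫ := fun u v =>
    Submodule.inner_starProjection_left_eq_right M1 u v
  have hadj2 : ∀ u v : H, ⟪p2 u, v⟫ = ⟪u, p2 v⟫ := fun u v =>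
    Submodule.inner_starProjection_left_eq_right M2 u v
  have hadjb : ∀ u v : H, ⟪b u, v⟫ = ⟪u, b v⟫ := by
    intro u v
    simp only [hb, hadj1, hadj2]
  -- membership facts
  have hp1mem : ∀ x, p1 x ∈ M1 := fun x => (Submodule.orthogonalProjection M1 x).2
  have hp2mem : ∀ x, p2 x ∈ M2 := fun x => (Submodule.orthogonalProjection M2 x).2
  have hp1id : ∀ x ∈ M1, p1 x = x := fun x hx => Submodule.starProjection_eq_self_iff (K := M1) |>.mpr hx
  have hp2id : ∀ x ∈ M2, p2 x = x := fun x hx => Submodule.starProjection_eq_self_iff (K := M2) |>.mpr hx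
  -- the iterated point
  set x : H := p1 h with hx
  set u : ℕ → H := fun n => b^[n] x with hu
  have humem : ∀ n, u n ∈ M1 := by
    intro n
    induction n with
    | zero => exact hp1mem h
    | succ n ih =>
      show b^[n + 1] x ∈ M1
      rw [Function.iterate_succ_apply']; exact hp1mem _
  have hushift : ∀ n, u (n + 1) = b (u n) := by
    intro n; rw [hu]; simp [Function.iterate_succ_apply']
  -- t k = ⟪b^[k] x, x⟫
  have hadjbn : ∀ (j : ℕ) (a c : H), ⟪b^[j] a, c⟫ = ⟪a, b^[j] c⟫ := by
    intro j
    induction j with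
    | zero => intro a c; rfl
    | succ j ihj =>
      intro a c
      rw [Function.iterate_succ_apply', hadjb, ihj, ← Function.iterate_succ_apply,
        Function.iterate_succ_apply']
  set t : ℕ → ℝ := fun k => ⟪b^[k] x, x⟫ with ht
  have hsplit : ∀ m n : ℕ, t (m + n) = ⟪b^[m] x, b^[n] x⟫ := by
    intro m n
    have e : t (m + n) = ⟪b^[n] (b^[m] x), x⟫ := by
      show (⟪b^[m + n] x, x⟫ : ℝ) = _
      rw [Nat.add_comm m n, Function.iterate_add_apply]
    rw [e, hadjbn n (b^[m] x) x]
  -- t even values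
  have hteven : ∀ n, t (2 * n) = ‖u n‖ ^ 2 := by
    intro n
    rw [two_mul, hsplit n n, real_inner_self_eq_norm_sq]
  have htodd : ∀ n, t (2 * n + 1) = ‖p2 (p1 (u n))‖ ^ 2 := by
    intro n
    rw [two_mul, show n + n + 1 = (n+1) + n from by ring, hsplit (n+1) n,
      Function.iterate_succ_apply']
    show (⟪b (u n), u n⟫ : ℝ) = _
    rw [hb]
    show (⟪p1 (p2 (p1 (u n))), u n⟫ : ℝ) = _
    rw [hadj1, hp1id (u n) (humem n)]
    exact vn_inner_self M2 (u n)
  -- t is antitone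
  have htanti : ∀ k, t (k + 1) ≤ t k := by
    intro k
    rcases Nat.even_or_odd k with ⟨n, hn⟩ | ⟨n, hn⟩
    · -- k = 2n : t(2n+1) ≤ t(2n)
      subst hn
      rw [show n + n = 2 * n from (two_mul n).symm, htodd n, hteven n]
      have h1 : ‖p2 (p1 (u n))‖ ≤ ‖p1 (u n)‖ := vn_norm_le M2 _
      have h2 : ‖p1 (u n)‖ ≤ ‖u n‖ := vn_norm_le M1 _
      nlinarith [norm_nonneg (p2 (p1 (u n))), norm_nonneg (u n)]
    · -- k = 2n+1 : t(2n+2) ≤ t(2n+1)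
      subst hn
      rw [show 2 * n + 1 + 1 = 2 * (n + 1) from by ring, hteven (n+1), htodd n]
      rw [hushift n]
      have : b (u n) = p1 (p2 (p1 (u n))) := rfl
      rw [this]
      have h1 : ‖p1 (p2 (p1 (u n)))‖ ≤ ‖p2 (p1 (u n))‖ := vn_norm_le M1 _
      nlinarith [norm_nonneg (p1 (p2 (p1 (u n)))), norm_nonneg (p2 (p1 (u n)))]
  have htanti' : Antitone t := antitone_nat_of_succ_le htanti
  have htnonneg : ∀ k, 0 ≤ t k := by
    intro k
    rcases Nat.even_or_odd k with ⟨n, hn⟩ | ⟨n, hn⟩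
    · subst hn; rw [show n + n = 2 * n from (two_mul n).symm, hteven]; positivity
    · subst hn; rw [htodd]; positivity
  -- t converges
  have htbdd : BddBelow (Set.range t) := ⟨0, by rintro _ ⟨k, rfl⟩; exact htnonneg k⟩
  obtain ⟨L, hL⟩ : ∃ L, Tendsto t atTop (nhds L) :=
    ⟨_, tendsto_atTop_ciInf htanti' htbdd⟩
  -- u is Cauchy
  have hcauchy : CauchySeq u := by
    rw [Metric.cauchySeq_iff]
    intro ε hε
    have hε4 : 0 < ε ^ 2 / 4 := by positivity
    obtain ⟨N, hN⟩ := (Metric.tendsto_atTop.mp hL) (ε ^ 2 / 4) hε4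
    refine ⟨N, fun m hm n hn => ?_⟩
    have hdist : dist (u m) (u n) ^ 2 = t (2 * m) - 2 * t (m + n) + t (2 * n) := by
      rw [dist_eq_norm, hteven, hteven, hsplit m n, ← real_inner_self_eq_norm_sq,
        inner_sub_sub_self]
      have : (⟪u n, u m⟫ : ℝ) = ⟪u m, u n⟫ := real_inner_comm _ _
      rw [this, real_inner_self_eq_norm_sq, real_inner_self_eq_norm_sq]; ring
    have h1 : |t (2 * m) - L| < ε ^ 2 / 4 := hN _ (by omega)
    have h2 : |t (m + n) - L| < ε ^ 2 / 4 := hN _ (by omega)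
    have h3 : |t (2 * n) - L| < ε ^ 2 / 4 := hN _ (by omega)
    rw [abs_lt] at h1 h2 h3
    have hd2 : dist (u m) (u n) ^ 2 < ε ^ 2 := by rw [hdist]; linarith
    have hdn : (0:ℝ) ≤ dist (u m) (u n) := dist_nonneg
    nlinarith
  obtain ⟨y, hy⟩ := cauchySeq_tendsto_of_complete hcauchy
  -- y is a fixed point of b
  have hby : b y = y := by
    have h1 : Tendsto (fun n => b (u n)) atTop (nhds (b y)) := (hbcont.tendsto y).comp hy
    have h2 : Tendsto (fun n => u (n + 1)) atTop (nhds y) :=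
      hy.comp (tendsto_add_atTop_nat 1)
    have : (fun n => u (n + 1)) = fun n => b (u n) := funext hushift
    rw [this] at h2
    exact tendsto_nhds_unique h1 h2
  -- y ∈ M1 ⊓ M2
  have hnormchain : ‖p1 y‖ = ‖y‖ := by
    have h0 : ‖y‖ = ‖p1 (p2 (p1 y))‖ := by conv_lhs => rw [← hby]
    have h1 : ‖p1 (p2 (p1 y))‖ ≤ ‖p2 (p1 y)‖ := vn_norm_le M1 _
    have h2 : ‖p2 (p1 y)‖ ≤ ‖p1 y‖ := vn_norm_le M2 _
    have h3 : ‖p1 y‖ ≤ ‖y‖ := vn_norm_le M1 _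
    linarith
  have hp1y : p1 y = y := vn_eq_self_of_norm M1 hnormchain
  have hnorm2 : ‖p2 y‖ = ‖y‖ := by
    have h0 : ‖y‖ = ‖p1 (p2 (p1 y))‖ := by conv_lhs => rw [← hby]
    have h1 : ‖p1 (p2 (p1 y))‖ ≤ ‖p2 (p1 y)‖ := vn_norm_le M1 _
    have h3 : ‖p2 y‖ ≤ ‖y‖ := vn_norm_le M2 _
    rw [hp1y] at h0 h1
    linarith
  have hp2y : p2 y = y := vn_eq_self_of_norm M2 hnorm2
  have hymem : y ∈ M1 ⊓ M2 :=
    ⟨by rw [← hp1y]; exact hp1mem y, by rw [← hp2y]; exact hp2mem y⟩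
  -- y = P_I h
  have hyproj : (Submodule.orthogonalProjection (M1 ⊓ M2) h : H) = y := by
    apply Submodule.eq_starProjection_of_mem_of_inner_eq_zero (K := M1 ⊓ M2) hymem
    intro w hw
    have hw1 : w ∈ M1 := hw.1
    have hw2 : w ∈ M2 := hw.2
    have hbw : b w = w := by
      show p1 (p2 (p1 w)) = w
      rw [hp1id w hw1, hp2id w hw2, hp1id w hw1]
    have hbiterw : ∀ n, b^[n] w = w := by
      intro n; induction n with
      | zero => rfl
      | succ n ih => rw [Function.iterate_succ_apply', ih, hbw]
    have hconst : ∀ n, (⟪u n, w⟫ : ℝ) = ⟪h, w⟫ := by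
      intro n
      have e : (⟪u n, w⟫ : ℝ) = ⟪x, b^[n] w⟫ := hadjbn n x w
      rw [e, hbiterw]
      show (⟪p1 h, w⟫ : ℝ) = ⟪h, w⟫
      rw [hadj1, hp1id w hw1]
    have hlim : Tendsto (fun n => (⟪u n, w⟫ : ℝ)) atTop (nhds ⟪y, w⟫) :=
      ((continuous_inner.comp (continuous_id.prodMk continuous_const)).tendsto y).comp hy
    have : (⟪y, w⟫ : ℝ) = ⟪h, w⟫ := by
      have : Tendsto (fun _ : ℕ => (⟪h, w⟫ : ℝ)) atTop (nhds ⟪y, w⟫) := by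
        rw [show (fun _ : ℕ => (⟪h, w⟫ : ℝ)) = fun n => ⟪u n, w⟫ from funext fun n => (hconst n).symm]
        exact hlim
      exact tendsto_nhds_unique this tendsto_const_nhds
    rw [inner_sub_left, this]; ring
  -- conclude
  rw [hyproj]
  have hfshift : ∀ k, f^[k + 1] h = p2 (u k) := by
    intro k
    induction k with
    | zero => simp [hu, hf, hx]
    | succ k ih =>
      rw [Function.iterate_succ_apply', ih, hushift]
      show p2 (p1 (p2 (u k))) = p2 (p1 (p2 (p1 (u k))))
      rw [hp1id (u k) (humem k)]
  have hmain : Tendsto (fun k => f^[k + 1] h) atTop (nhds y) := by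
    rw [show (fun k => f^[k + 1] h) = fun k => p2 (u k) from funext hfshift]
    have := (hp2cont.tendsto y).comp hy
    rwa [hp2y] at this
  exact (Filter.tendsto_add_atTop_iff_nat 1).mp hmain
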